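/- Suppose in addition that each cost function takes values in [0,1], i.e. ℓ_t : K → [0,1] for all t. Then for any probability measure p_U on K absolutely continuous with respect to μ_0 with D(p_U‖μ_0) < ∞, the expected regret satisfies Σ_{t=1}^T ∫_K ℓ_t dμ_{t−1} − Σ_{t=1}^T ∫_K ℓ_t dp_U ≤ η^{−1}·D(p_U‖μ_0) + T·η/8. -/

import Mathlib

open MeasureTheory

/-- The probability measure on `K` with density `e^{-g(x)} / ∫_K e^{-g}` with respect to
Lebesgue measure. -/
noncomputable def gibbsMeasure {d : ℕ} (K : Set (EuclideanSpace ℝ (Fin d)))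
    (g : EuclideanSpace ℝ (Fin d) → ℝ) : Measure (EuclideanSpace ℝ (Fin d)) :=
  (volume.restrict K).withDensity
    (fun x => ENNReal.ofReal (Real.exp (-g x) / ∫ y in K, Real.exp (-g y)))

/-- The exponential-weights mixed strategy at time `t`: the probability measure on `K`
with density proportional to `exp(−(η·Σ_{s=1}^t ℓ_s(x) + R(x)))`. -/
noncomputable def ewMeasure {d : ℕ} (K : Set (EuclideanSpace ℝ (Fin d)))
    (ℓ : ℕ → EuclideanSpace ℝ (Fin d) → ℝ) (R : EuclideanSpace ℝ (Fin d) → ℝ)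
    (η : ℝ) (t : ℕ) : Measure (EuclideanSpace ℝ (Fin d)) :=
  gibbsMeasure K (fun x => η * ∑ i ∈ Finset.Icc 1 t, ℓ i x + R x)

/-- Kullback–Leibler divergence `D(p‖q) = ∫ log (dp/dq) dp`. -/
noncomputable def klDiv' {α : Type*} [MeasurableSpace α] (p q : Measure α) : ℝ :=
  ∫ x, Real.log ((p.rnDeriv q x).toReal) ∂p


lemma hoeff_D_pos {p : ℝ} (hp0 : 0 ≤ p) (hp1 : p ≤ 1) (t : ℝ) :
    0 < 1 - p + p * Real.exp t := by
  rcases hp1.lt_or_eq with h1 | h1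
  · have := mul_nonneg hp0 (Real.exp_pos t).le
    linarith
  · subst h1; simpa using Real.exp_pos t

lemma hoeff_scalar {p : ℝ} (hp0 : 0 ≤ p) (hp1 : p ≤ 1) (h : ℝ) :
    Real.log (1 - p + p * Real.exp h) ≤ p * h + h ^ 2 / 8 := by
  set D : ℝ → ℝ := fun t => 1 - p + p * Real.exp t with hDdef
  have hDpos : ∀ t, 0 < D t := hoeff_D_pos hp0 hp1
  have hD : ∀ t, HasDerivAt D (p * Real.exp t) t := fun t =>
    ((Real.hasDerivAt_exp t).const_mul p).const_add (1 - p)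
  set φ : ℝ → ℝ := fun t => p * t + t ^ 2 / 8 - Real.log (D t) with hφdef
  set g : ℝ → ℝ := fun t => p + t / 4 - p * Real.exp t / D t with hgdef
  have hφ' : ∀ t, HasDerivAt φ (g t) t := by
    intro t
    have h1 : HasDerivAt (fun t : ℝ => p * t) p t := by
      simpa using (hasDerivAt_id t).const_mul p
    have h2 : HasDerivAt (fun t : ℝ => t ^ 2 / 8) (t / 4) t := by
      have := (hasDerivAt_pow 2 t).div_const 8
      refine this.congr_deriv ?_; norm_num; ring
    have h3 : HasDerivAt (fun t => Real.log (D t)) (p * Real.exp t / D t) t :=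
      (hD t).log (hDpos t).ne'
    exact (h1.add h2).sub h3
  have hg' : ∀ t, HasDerivAt g
      (1 / 4 - (p * Real.exp t * D t - p * Real.exp t * (p * Real.exp t)) / (D t) ^ 2) t := by
    intro t
    have h2 : HasDerivAt (fun t : ℝ => p + t / 4) (1 / 4) t := by
      simpa using ((hasDerivAt_id t).div_const 4).const_add p
    have h3 : HasDerivAt (fun t => p * Real.exp t / D t)
        ((p * Real.exp t * D t - p * Real.exp t * (p * Real.exp t)) / (D t) ^ 2) t :=
      ((Real.hasDerivAt_exp t).const_mul p).div (hD t) (hDpos t).ne'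
    exact h2.sub h3
  have hgderiv_nonneg : ∀ t, 0 ≤ deriv g t := by
    intro t
    rw [(hg' t).deriv]
    have hDt := hDpos t
    have hle : (p * Real.exp t * D t - p * Real.exp t * (p * Real.exp t)) / (D t) ^ 2
        ≤ 1 / 4 := by
      have key : ∀ a b : ℝ, 0 < b → (a * b - a * a) / b ^ 2 ≤ 1 / 4 := by
        intro a b hb
        rw [div_le_iff₀ (by positivity)]
        nlinarith [sq_nonneg (b - 2 * a)]
      exact key _ _ hDt
    linarith
  have hgmono : Monotone g :=
    monotone_of_deriv_nonneg (fun t => (hg' t).differentiableAt) hgderiv_nonneg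
  have hg0 : g 0 = 0 := by
    simp only [hgdef, hDdef]
    field_simp
    rw [Real.exp_zero]; ring
  have hφ0 : φ 0 = 0 := by
    simp [hφdef, hDdef]
  have key : 0 ≤ φ h := by
    rcases le_total 0 h with hh | hh
    · have hmono : MonotoneOn φ (Set.Ici 0) := by
        apply monotoneOn_of_deriv_nonneg (convex_Ici 0)
          (fun t _ => (hφ' t).continuousAt.continuousWithinAt)
          (fun t _ => ((hφ' t).differentiableAt).differentiableWithinAt)
        intro t ht
        rw [(hφ' t).deriv]
        have : g 0 ≤ g t := hgmono (le_of_lt (by simpa using ht))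
        linarith [hg0 ▸ this]
      have := hmono (Set.self_mem_Ici) (Set.mem_Ici.2 hh) hh
      linarith [hφ0 ▸ this]
    · have hanti : AntitoneOn φ (Set.Iic 0) := by
        apply antitoneOn_of_deriv_nonpos (convex_Iic 0)
          (fun t _ => (hφ' t).continuousAt.continuousWithinAt)
          (fun t _ => ((hφ' t).differentiableAt).differentiableWithinAt)
        intro t ht
        rw [(hφ' t).deriv]
        have : g t ≤ g 0 := hgmono (le_of_lt (by simpa using ht))
        linarith [hg0 ▸ this]
      have := hanti (Set.mem_Iic.2 hh) (Set.self_mem_Iic) hh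
      linarith [hφ0 ▸ this]
  have : Real.log (D h) ≤ p * h + h ^ 2 / 8 := by
    simp only [hφdef] at key; linarith
  simpa [hDdef] using this

lemma hoeff_integral {α : Type*} [MeasurableSpace α] (μ : Measure α) [IsProbabilityMeasure μ]
    {f : α → ℝ} (hf : AEMeasurable f μ) (h01 : ∀ᵐ x ∂μ, f x ∈ Set.Icc (0:ℝ) 1) (s : ℝ) :
    Real.log (∫ x, Real.exp (s * f x) ∂μ) ≤ s * (∫ x, f x ∂μ) + s ^ 2 / 8 := by
  have hfint : Integrable f μ := by
    apply Integrable.mono' (integrable_const (1:ℝ)) hf.aestronglyMeasurable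
    filter_upwards [h01] with x hx
    rw [Real.norm_eq_abs, abs_le]
    exact ⟨by linarith [hx.1], hx.2⟩
  have hexp_meas : AEStronglyMeasurable (fun x => Real.exp (s * f x)) μ :=
    (Real.measurable_exp.comp_aemeasurable (hf.const_mul s)).aestronglyMeasurable
  have hub : ∀ᵐ x ∂μ, s * f x ≤ |s| := by
    filter_upwards [h01] with x hx
    calc s * f x ≤ |s| * f x := mul_le_mul_of_nonneg_right (le_abs_self s) hx.1
    _ ≤ |s| * 1 := mul_le_mul_of_nonneg_left hx.2 (abs_nonneg s)
    _ = |s| := mul_one _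
  have hlb : ∀ᵐ x ∂μ, -|s| ≤ s * f x := by
    filter_upwards [h01] with x hx
    have h1 : (-s) * f x ≤ |s| * f x :=
      mul_le_mul_of_nonneg_right ((le_abs_self (-s)).trans (abs_neg s).le) hx.1
    have h2 : |s| * f x ≤ |s| := by nlinarith [abs_nonneg s, hx.2]
    linarith
  have hexpint : Integrable (fun x => Real.exp (s * f x)) μ := by
    apply Integrable.mono' (integrable_const (Real.exp |s|)) hexp_meas
    filter_upwards [hub] with x hx
    rw [Real.norm_eq_abs, Real.abs_exp]
    exact Real.exp_le_exp.2 hx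
  set m := ∫ x, f x ∂μ with hm
  have hm0 : 0 ≤ m := integral_nonneg_of_ae (by filter_upwards [h01] with x hx using hx.1)
  have hm1 : m ≤ 1 := by
    have := integral_mono_ae hfint (integrable_const (1:ℝ))
      (by filter_upwards [h01] with x hx using hx.2)
    simpa using this
  have hpos : 0 < ∫ x, Real.exp (s * f x) ∂μ := by
    have hle := integral_mono_ae (integrable_const (Real.exp (-|s|))) hexpint
      (by filter_upwards [hlb] with x hx using Real.exp_le_exp.2 hx)
    have : (0:ℝ) < Real.exp (-|s|) := Real.exp_pos _
    simpa using lt_of_lt_of_le (by simpa using this) hle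
  have hptwise : ∀ᵐ x ∂μ, Real.exp (s * f x) ≤ 1 - f x + f x * Real.exp s := by
    filter_upwards [h01] with x hx
    have := convexOn_exp.2 (Set.mem_univ (0:ℝ)) (Set.mem_univ s)
      (by linarith [hx.2] : (0:ℝ) ≤ 1 - f x) hx.1 (by ring)
    simpa [smul_eq_mul, mul_comm, Real.exp_zero] using this
  have hint2 : Integrable (fun x => 1 - f x + f x * Real.exp s) μ :=
    ((integrable_const (1:ℝ)).sub hfint).add (hfint.mul_const _)
  have hIle : ∫ x, Real.exp (s * f x) ∂μ ≤ 1 - m + m * Real.exp s := by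
    have := integral_mono_ae hexpint hint2 hptwise
    calc ∫ x, Real.exp (s * f x) ∂μ ≤ ∫ x, (1 - f x + f x * Real.exp s) ∂μ := this
    _ = 1 - m + m * Real.exp s := by
        have h1 : Integrable (fun x => 1 - f x) μ := (integrable_const 1).sub hfint
        have h2 : Integrable (fun x => f x * Real.exp s) μ := hfint.mul_const _
        rw [integral_add h1 h2, integral_sub (integrable_const (1:ℝ)) hfint,
          integral_const, integral_mul_const]
        simp; rfl
  calc Real.log (∫ x, Real.exp (s * f x) ∂μ) ≤ Real.log (1 - m + m * Real.exp s) :=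
        Real.log_le_log hpos hIle
  _ ≤ m * s + s ^ 2 / 8 := hoeff_scalar hm0 hm1 s
  _ = s * m + s ^ 2 / 8 := by ring

section Gibbs
open scoped NNReal ENNReal
variable {d : ℕ} {K : Set (EuclideanSpace ℝ (Fin d))} {g : EuclideanSpace ℝ (Fin d) → ℝ}

lemma finite_restrict (hKfin : volume K ≠ ⊤) : IsFiniteMeasure (volume.restrict K) :=
  ⟨by rw [Measure.restrict_apply_univ]; exact hKfin.lt_top⟩

lemma gibbs_integrableOn (hK : MeasurableSet K) (hKfin : volume K ≠ ⊤)
    (hg : Measurable g) {C : ℝ} (hC : ∀ x ∈ K, |g x| ≤ C) :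
    IntegrableOn (fun x => Real.exp (-g x)) K volume := by
  haveI := finite_restrict (K := K) hKfin
  apply Integrable.mono' (integrable_const (Real.exp C)) hg.neg.exp.aestronglyMeasurable
  filter_upwards [ae_restrict_mem hK] with x hx
  rw [Real.norm_eq_abs, Real.abs_exp]
  exact Real.exp_le_exp.2 (by rw [Pi.neg_apply]; linarith [(abs_le.1 (hC x hx)).1])

lemma gibbs_Zpos (hK : MeasurableSet K) (hKfin : volume K ≠ ⊤) (hKpos : volume K ≠ 0)
    (hg : Measurable g) {C : ℝ} (hC : ∀ x ∈ K, |g x| ≤ C) :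
    0 < ∫ x in K, Real.exp (-g x) := by
  haveI := finite_restrict (K := K) hKfin
  have hlb : ∀ᵐ x ∂(volume.restrict K), Real.exp (-C) ≤ Real.exp (-g x) := by
    filter_upwards [ae_restrict_mem hK] with x hx
    exact Real.exp_le_exp.2 (by linarith [(abs_le.1 (hC x hx)).2])
  have hmono := integral_mono_ae (integrable_const (Real.exp (-C)))
    (gibbs_integrableOn hK hKfin hg hC) hlb
  rw [setIntegral_const] at hmono
  have hv : 0 < (volume K).toReal := ENNReal.toReal_pos hKpos hKfin
  calc (0:ℝ) < (volume K).toReal • Real.exp (-C) := by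
        rw [smul_eq_mul]; positivity
  _ ≤ _ := hmono

lemma gibbs_isProb (hK : MeasurableSet K) (hKfin : volume K ≠ ⊤) (hKpos : volume K ≠ 0)
    (hg : Measurable g) {C : ℝ} (hC : ∀ x ∈ K, |g x| ≤ C) :
    IsProbabilityMeasure (gibbsMeasure K g) := by
  haveI := finite_restrict (K := K) hKfin
  set Z := ∫ y in K, Real.exp (-g y) with hZ
  have hZpos := gibbs_Zpos hK hKfin hKpos hg hC
  constructor
  rw [gibbsMeasure, withDensity_apply _ MeasurableSet.univ, Measure.restrict_univ]
  have hint : Integrable (fun x => Real.exp (-g x) / Z) (volume.restrict K) :=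
    (gibbs_integrableOn hK hKfin hg hC).div_const Z
  rw [← ofReal_integral_eq_lintegral_ofReal hint
    (Filter.Eventually.of_forall fun x => by positivity)]
  rw [integral_div, ← hZ, div_self hZpos.ne']
  simp

lemma gibbs_ae_mem (hK : MeasurableSet K) : ∀ᵐ x ∂(gibbsMeasure K g), x ∈ K := by
  rw [ae_iff]
  have : {x | ¬ x ∈ K} = Kᶜ := rfl
  rw [this, gibbsMeasure, withDensity_apply _ hK.compl, Measure.restrict_restrict hK.compl]
  rw [Set.compl_inter_self, Measure.restrict_empty, lintegral_zero_measure]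

lemma gibbs_integral (hK : MeasurableSet K) (hg : Measurable g)
    {f : EuclideanSpace ℝ (Fin d) → ℝ} (hf : Measurable f) :
    ∫ x, f x ∂(gibbsMeasure K g)
      = (∫ x in K, f x * Real.exp (-g x)) / (∫ y in K, Real.exp (-g y)) := by
  set Z := ∫ y in K, Real.exp (-g y) with hZ
  have hrw : (fun x => ENNReal.ofReal (Real.exp (-g x) / Z))
      = fun x => ((Real.toNNReal (Real.exp (-g x) / Z) : ℝ≥0) : ℝ≥0∞) := rfl
  have hZnn : 0 ≤ Z := integral_nonneg fun x => (Real.exp_pos _).le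
  have hmeas : Measurable fun x => Real.toNNReal (Real.exp (-g x) / Z) :=
    (hg.neg.exp.div_const Z).real_toNNReal
  rw [gibbsMeasure, hrw, integral_withDensity_eq_integral_smul hmeas f]
  have : ∀ x, (Real.toNNReal (Real.exp (-g x) / Z) : ℝ≥0) • f x
      = (f x * Real.exp (-g x)) / Z := by
    intro x
    have hnn : 0 ≤ Real.exp (-g x) / Z := by positivity
    rw [NNReal.smul_def, Real.coe_toNNReal _ hnn, smul_eq_mul]
    ring
  simp_rw [this]
  rw [integral_div]

end Gibbs

lemma gibbs_variational {α : Type*} [MeasurableSpace α] (μ p : Measure α)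
    [IsProbabilityMeasure μ] [IsProbabilityMeasure p] (hac : p ≪ μ)
    {F : α → ℝ} (hF : Measurable F) (hFint : Integrable F p) {B : ℝ}
    (hFub : ∀ᵐ x ∂μ, Real.exp (F x) ≤ B)
    (hlog : Integrable (fun x => Real.log ((p.rnDeriv μ x).toReal)) p)
    (hA : 0 < ∫ x, Real.exp (F x) ∂μ)
    (hexpint : Integrable (fun x => Real.exp (F x)) μ) :
    ∫ x, F x ∂p - Real.log (∫ x, Real.exp (F x) ∂μ)
      ≤ ∫ x, Real.log ((p.rnDeriv μ x).toReal) ∂p := by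
  set A := ∫ x, Real.exp (F x) ∂μ with hAdef
  set c := Real.log A with hcdef
  set ρ : α → ℝ := fun x => (p.rnDeriv μ x).toReal with hρdef
  have hρmeas : Measurable ρ := (Measure.measurable_rnDeriv p μ).ennreal_toReal
  have hρpos : ∀ᵐ x ∂p, 0 < ρ x := by
    filter_upwards [Measure.rnDeriv_pos hac, hac.ae_le (Measure.rnDeriv_lt_top p μ)]
      with x h1 h2
    exact ENNReal.toReal_pos h1.ne' h2.ne
  -- pointwise inequality
  have hptwise : ∀ᵐ x ∂p,
      (F x - c) - Real.log (ρ x) ≤ Real.exp (F x - c) / ρ x - 1 := by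
    filter_upwards [hρpos] with x hx
    have h1 : Real.log (Real.exp (F x - c) / ρ x) ≤ Real.exp (F x - c) / ρ x - 1 :=
      Real.log_le_sub_one_of_pos (by positivity)
    rwa [Real.log_div (Real.exp_ne_zero _) hx.ne', Real.log_exp] at h1
  -- integrability of the RHS
  have hprodmeas : Measurable (fun x => Real.exp (F x - c) / ρ x * ρ x) :=
    (((hF.sub measurable_const).exp).div hρmeas).mul hρmeas
  have hprod_le : ∀ x, Real.exp (F x - c) / ρ x * ρ x ≤ Real.exp (F x - c) := by
    intro x
    rcases eq_or_ne (ρ x) 0 with h | h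
    · simp [h]; positivity
    · rw [div_mul_cancel₀ _ h]
  have hprod_nonneg : ∀ x, 0 ≤ Real.exp (F x - c) / ρ x * ρ x := by
    intro x
    have : 0 ≤ ρ x := ENNReal.toReal_nonneg
    positivity
  have hexpc : Integrable (fun x => Real.exp (F x - c)) μ := by
    have : (fun x => Real.exp (F x - c)) = fun x => Real.exp (F x) * Real.exp (-c) := by
      funext x; rw [← Real.exp_add]; ring_nf
    rw [this]
    exact hexpint.mul_const _
  have hprodint : Integrable (fun x => Real.exp (F x - c) / ρ x * ρ x) μ := by
    apply Integrable.mono' hexpc hprodmeas.aestronglyMeasurable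
    exact Filter.Eventually.of_forall fun x => by
      rw [Real.norm_eq_abs, abs_of_nonneg (hprod_nonneg x)]; exact hprod_le x
  have hRint : Integrable (fun x => Real.exp (F x - c) / ρ x) p := by
    rw [← Measure.withDensity_rnDeriv_eq p μ hac,
      integrable_withDensity_iff (Measure.measurable_rnDeriv p μ)
        (Measure.rnDeriv_lt_top p μ)]
    exact hprodint
  -- ∫ exp(F-c)/ρ dp ≤ 1
  have hkey : ∫ x, Real.exp (F x - c) / ρ x ∂p ≤ 1 := by
    have h1 : ∫ x, ρ x • (Real.exp (F x - c) / ρ x) ∂μ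
        = ∫ x, Real.exp (F x - c) / ρ x ∂p := integral_rnDeriv_smul hac
    have h2 : ∫ x, ρ x • (Real.exp (F x - c) / ρ x) ∂μ ≤ ∫ x, Real.exp (F x - c) ∂μ := by
      apply integral_mono_ae _ hexpc
      · refine Filter.Eventually.of_forall fun x => ?_
        simp only [smul_eq_mul]
        rw [mul_comm]
        exact hprod_le x
      · have : (fun x => ρ x • (Real.exp (F x - c) / ρ x))
            = fun x => Real.exp (F x - c) / ρ x * ρ x := by
          funext x; rw [smul_eq_mul]; ring
        rw [this]; exact hprodint
    have h3 : ∫ x, Real.exp (F x - c) ∂μ = 1 := by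
      have he : (fun x => Real.exp (F x - c)) = fun x => Real.exp (F x) * Real.exp (-c) := by
        funext x; rw [← Real.exp_add]; ring_nf
      rw [he, integral_mul_const, ← hAdef, hcdef, Real.exp_neg, Real.exp_log hA,
        mul_inv_cancel₀ hA.ne']
    linarith [h1 ▸ h2]
  -- integrate the pointwise inequality
  have hGint : Integrable (fun x => F x - c) p := hFint.sub (integrable_const c)
  have hGL : Integrable (fun x => (F x - c) - Real.log (ρ x)) p := hGint.sub hlog
  have hRL : Integrable (fun x => Real.exp (F x - c) / ρ x - 1) p :=
    hRint.sub (integrable_const 1)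
  have hmain := integral_mono_ae hGL hRL hptwise
  rw [integral_sub hGint hlog, integral_sub hRint (integrable_const 1),
    integral_sub hFint (integrable_const c), integral_const] at hmain
  simp only [measure_univ, probReal_univ, ENNReal.toReal_one, smul_eq_mul, one_mul] at hmain
  have h1p : ∫ (_ : α), (1:ℝ) ∂p = 1 := by simp
  rw [h1p] at hmain
  linarith

lemma tele_Icc (F : ℕ → ℝ) (T : ℕ) :
    ∑ t ∈ Finset.Icc 1 T, (F (t - 1) - F t) = F 0 - F T := by
  induction T with
  | zero => simp
  | succ n ih =>
      rw [Finset.sum_Icc_succ_top (Nat.succ_le_succ (Nat.zero_le n)), ih]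
      simp

/-- if in addition each cost function takes values in [0,1], then
`Σ_t ∫ ℓ_t dμ_{t−1} − Σ_t ∫ ℓ_t dp_U ≤ η⁻¹·D(p_U‖μ_0) + T·η/8`. -/
theorem exp_weights_regret_bound
    {d : ℕ} (T : ℕ) (K : Set (EuclideanSpace ℝ (Fin d)))
    (hKcomp : IsCompact K) (hKconv : Convex ℝ K) (hKint : (interior K).Nonempty)
    (hKpos : 0 < volume K)
    (ℓ : ℕ → EuclideanSpace ℝ (Fin d) → ℝ) (R : EuclideanSpace ℝ (Fin d) → ℝ)
    (hℓmeas : ∀ t, Measurable (ℓ t)) (hRmeas : Measurable R)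
    (hℓbdd : ∀ t, ∃ C, ∀ x ∈ K, |ℓ t x| ≤ C) (hRbdd : ∃ C, ∀ x ∈ K, |R x| ≤ C)
    (hℓ01 : ∀ t, ∀ x ∈ K, ℓ t x ∈ Set.Icc (0 : ℝ) 1)
    (η : ℝ) (hη : 0 < η)
    (pU : Measure (EuclideanSpace ℝ (Fin d))) [IsProbabilityMeasure pU]
    (hpUK : pU Kᶜ = 0)
    (hpUac : pU ≪ ewMeasure K ℓ R η 0)
    (hKLfin : Integrable
      (fun x => Real.log ((pU.rnDeriv (ewMeasure K ℓ R η 0) x).toReal)) pU) :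
    (∑ t ∈ Finset.Icc 1 T, ∫ x, ℓ t x ∂(ewMeasure K ℓ R η (t - 1))) -
        (∑ t ∈ Finset.Icc 1 T, ∫ x, ℓ t x ∂pU) ≤
      η⁻¹ * klDiv' pU (ewMeasure K ℓ R η 0) + T * η / 8 := by
  have hK : MeasurableSet K := hKcomp.isClosed.measurableSet
  have hKfin : volume K ≠ ⊤ := hKcomp.measure_lt_top.ne
  have hKne : volume K ≠ 0 := hKpos.ne'
  obtain ⟨CR, hCR⟩ := hRbdd
  set st : ℕ → EuclideanSpace ℝ (Fin d) → ℝ :=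
    fun t x => η * ∑ i ∈ Finset.Icc 1 t, ℓ i x + R x with hstdef
  have hew : ∀ t, ewMeasure K ℓ R η t = gibbsMeasure K (st t) := fun t => rfl
  have hLmeas : ∀ t, Measurable fun x => ∑ i ∈ Finset.Icc 1 t, ℓ i x :=
    fun t => Finset.measurable_sum _ fun i _ => hℓmeas i
  have hstmeas : ∀ t, Measurable (st t) :=
    fun t => ((hLmeas t).const_mul η).add hRmeas
  have hL0 : ∀ t, ∀ x ∈ K, 0 ≤ ∑ i ∈ Finset.Icc 1 t, ℓ i x :=
    fun t x hx => Finset.sum_nonneg fun i _ => (hℓ01 i x hx).1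
  have hLt : ∀ t, ∀ x ∈ K, ∑ i ∈ Finset.Icc 1 t, ℓ i x ≤ (t : ℝ) := by
    intro t x hx
    calc ∑ i ∈ Finset.Icc 1 t, ℓ i x ≤ ∑ _i ∈ Finset.Icc 1 t, (1:ℝ) :=
          Finset.sum_le_sum fun i _ => (hℓ01 i x hx).2
    _ = (t : ℝ) := by simp [Nat.card_Icc]
  have hstbdd : ∀ t, ∀ x ∈ K, |st t x| ≤ η * t + CR := by
    intro t x hx
    have h1 := hL0 t x hx
    have h2 := hLt t x hx
    have h3 := abs_le.1 (hCR x hx)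
    rw [abs_le]
    constructor
    · simp only [hstdef]
      nlinarith
    · simp only [hstdef]
      nlinarith
  set Z : ℕ → ℝ := fun t => ∫ x in K, Real.exp (-(st t x)) with hZdef
  have hZpos : ∀ t, 0 < Z t := fun t => gibbs_Zpos hK hKfin hKne (hstmeas t) (hstbdd t)
  have hprob : ∀ t, IsProbabilityMeasure (ewMeasure K ℓ R η t) := by
    intro t
    rw [hew t]
    exact gibbs_isProb hK hKfin hKne (hstmeas t) (hstbdd t)
  have haeK : ∀ t, ∀ᵐ x ∂(ewMeasure K ℓ R η t), x ∈ K := by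
    intro t
    rw [hew t]
    exact gibbs_ae_mem hK
  -- per-round inequality
  set I : ℕ → ℝ := fun t => ∫ x, ℓ t x ∂(ewMeasure K ℓ R η (t - 1)) with hIdef
  have hstep : ∀ t ∈ Finset.Icc 1 T,
      η * I t ≤ (Real.log (Z (t-1)) - Real.log (Z t)) + η^2/8 := by
    intro t ht
    obtain ⟨ht1, _⟩ := Finset.mem_Icc.1 ht
    obtain ⟨n, rfl⟩ : ∃ n, t = n + 1 := ⟨t - 1, (Nat.succ_pred_eq_of_pos ht1).symm⟩
    have hn1 : (n + 1) - 1 = n := rfl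
    haveI := hprob n
    have hsplit : ∀ x, st (n+1) x = η * ℓ (n+1) x + st n x := by
      intro x
      simp only [hstdef]
      rw [Finset.sum_Icc_succ_top (Nat.succ_le_succ (Nat.zero_le n))]
      ring
    have hIeq : ∫ x, Real.exp (-η * ℓ (n+1) x) ∂(ewMeasure K ℓ R η n)
        = Z (n+1) / Z n := by
      rw [hew n, gibbs_integral hK (hstmeas n) ((hℓmeas (n+1)).const_mul (-η)).exp]
      congr 1
      apply setIntegral_congr_fun hK
      intro x _
      dsimp only
      rw [← Real.exp_add]
      congr 1
      rw [hsplit x]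
      ring
    have hhoeff := hoeff_integral (ewMeasure K ℓ R η n) (hℓmeas (n+1)).aemeasurable
      (by filter_upwards [haeK n] with x hx using hℓ01 (n+1) x hx) (-η)
    rw [hIeq, Real.log_div (hZpos (n+1)).ne' (hZpos n).ne'] at hhoeff
    have : (-η)^2 = η^2 := by ring
    rw [this] at hhoeff
    simp only [hIdef, hn1]
    nlinarith [hhoeff]
  -- summation and telescoping
  have hsum : η * ∑ t ∈ Finset.Icc 1 T, I t
      ≤ (Real.log (Z 0) - Real.log (Z T)) + T * (η^2/8) := by
    rw [Finset.mul_sum]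
    calc ∑ t ∈ Finset.Icc 1 T, η * I t
        ≤ ∑ t ∈ Finset.Icc 1 T, ((Real.log (Z (t-1)) - Real.log (Z t)) + η^2/8) :=
          Finset.sum_le_sum hstep
    _ = (Real.log (Z 0) - Real.log (Z T)) + T * (η^2/8) := by
        rw [Finset.sum_add_distrib, tele_Icc (fun t => Real.log (Z t)) T,
          Finset.sum_const, Nat.card_Icc]
        simp
  -- Gibbs variational bound
  haveI : IsProbabilityMeasure (ewMeasure K ℓ R η 0) := hprob 0
  have haeKp : ∀ᵐ x ∂pU, x ∈ K := by
    rw [ae_iff]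
    exact hpUK
  set F : EuclideanSpace ℝ (Fin d) → ℝ :=
    fun x => -(η * ∑ i ∈ Finset.Icc 1 T, ℓ i x) with hFdef
  have hFmeas : Measurable F := ((hLmeas T).const_mul η).neg
  have hFint_p : Integrable F pU := by
    apply Integrable.mono' (integrable_const (η * T)) hFmeas.aestronglyMeasurable
    filter_upwards [haeKp] with x hx
    rw [Real.norm_eq_abs, hFdef]
    rw [abs_neg, abs_mul, abs_of_pos hη]
    have h1 := hL0 T x hx
    have h2 := hLt T x hx
    rw [abs_of_nonneg h1]
    exact mul_le_mul_of_nonneg_left h2 hη.le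
  have hexpint : Integrable (fun x => Real.exp (F x)) (ewMeasure K ℓ R η 0) := by
    apply Integrable.mono' (integrable_const (1:ℝ)) hFmeas.exp.aestronglyMeasurable
    filter_upwards [haeK 0] with x hx
    rw [Real.norm_eq_abs, Real.abs_exp]
    rw [show (1:ℝ) = Real.exp 0 from (Real.exp_zero).symm]
    apply Real.exp_le_exp.2
    simp only [hFdef]
    have h1 := hL0 T x hx
    nlinarith
  have hAeq : ∫ x, Real.exp (F x) ∂(ewMeasure K ℓ R η 0) = Z T / Z 0 := by
    rw [hew 0, gibbs_integral hK (hstmeas 0) hFmeas.exp]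
    congr 1
    apply setIntegral_congr_fun hK
    intro x _
    dsimp only
    rw [← Real.exp_add]
    congr 1
    simp only [hFdef, hstdef]
    simp
    ring
  have hA : 0 < ∫ x, Real.exp (F x) ∂(ewMeasure K ℓ R η 0) := by
    rw [hAeq]; exact div_pos (hZpos T) (hZpos 0)
  have hFub1 : ∀ᵐ x ∂(ewMeasure K ℓ R η 0), Real.exp (F x) ≤ 1 := by
    filter_upwards [haeK 0] with x hx
    rw [show (1:ℝ) = Real.exp 0 from (Real.exp_zero).symm]
    apply Real.exp_le_exp.2
    simp only [hFdef]
    have h1 := hL0 T x hx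
    nlinarith
  have hgibbs := gibbs_variational (ewMeasure K ℓ R η 0) pU hpUac hFmeas hFint_p
    (B := 1) hFub1 hKLfin hA hexpint
  rw [hAeq, Real.log_div (hZpos T).ne' (hZpos 0).ne'] at hgibbs
  -- ∫ F dpU = -η * ∑ ∫ ℓ t dpU
  have hℓint : ∀ t, Integrable (ℓ t) pU := by
    intro t
    apply Integrable.mono' (integrable_const (1:ℝ)) (hℓmeas t).aestronglyMeasurable
    filter_upwards [haeKp] with x hx
    rw [Real.norm_eq_abs, abs_le]
    exact ⟨by linarith [(hℓ01 t x hx).1], (hℓ01 t x hx).2⟩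
  have hFint_eq : ∫ x, F x ∂pU
      = -(η * ∑ t ∈ Finset.Icc 1 T, ∫ x, ℓ t x ∂pU) := by
    simp only [hFdef]
    rw [integral_neg, integral_const_mul, integral_finset_sum _ fun i _ => hℓint i]
  rw [hFint_eq] at hgibbs
  -- combine
  set S := ∑ t ∈ Finset.Icc 1 T, I t with hSdef
  set P := ∑ t ∈ Finset.Icc 1 T, ∫ x, ℓ t x ∂pU with hPdef
  set D := klDiv' pU (ewMeasure K ℓ R η 0) with hDdef
  have hgibbs' : Real.log (Z 0) - Real.log (Z T) ≤ D + η * P := by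
    have : D = ∫ x, Real.log ((pU.rnDeriv (ewMeasure K ℓ R η 0) x).toReal) ∂pU := rfl
    rw [this]
    linarith [hgibbs]
  have hfinal : η * S ≤ D + η * P + T * (η^2/8) := by linarith
  have hgoal : S - P ≤ η⁻¹ * D + T * η / 8 := by
    have h2 : η * (S - P) ≤ D + T * (η^2/8) := by
      rw [mul_sub]; linarith
    have h3 : S - P = (η * (S - P)) / η := by field_simp
    rw [h3]
    calc (η * (S - P)) / η ≤ (D + T * (η^2/8)) / η := by
          gcongr
    _ = η⁻¹ * D + T * η / 8 := by field_simp
  exact hgoal
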